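/- For each j ∈ {1, …, n}, the per-interval error satisfies Δ_X(I_j) = p_j · sup_{s ∈ I_j} ( min(s, μ_j) − E[min(s, X) | X ∈ I_j] ). -/

import Mathlib

open MeasureTheory Pointwise

/-- The `j`-th region of the partition of `ℝ` induced by points `q 0 < q 1 < ⋯ < q n`:
`I_0 = (−∞, q 0]`, `I_j = (q (j−1), q j]` for `1 ≤ j ≤ n`, and `I_{n+1} = (q n, ∞)`. -/
noncomputable def seg (q : ℕ → ℝ) (n j : ℕ) : Set ℝ :=
  if j = 0 then Set.Iic (q 0)
  else if j ≤ n then Set.Ioc (q (j - 1)) (q j)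
  else Set.Ioi (q n)

/-- `p_j = P(X ∈ I_j)`. -/
noncomputable def segProb {Ω : Type*} [MeasurableSpace Ω]
    (P : Measure Ω) (X : Ω → ℝ) (q : ℕ → ℝ) (n j : ℕ) : ℝ :=
  (P {ω | X ω ∈ seg q n j}).toReal

/-- `μ_j = E[X | X ∈ I_j] = E[1_{X ∈ I_j} X] / p_j`. -/
noncomputable def segMean {Ω : Type*} [MeasurableSpace Ω]
    (P : Measure Ω) (X : Ω → ℝ) (q : ℕ → ℝ) (n j : ℕ) : ℝ :=
  (∫ ω in {ω | X ω ∈ seg q n j}, X ω ∂P) / segProb P X q n j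

/-- The induced piecewise linear approximation `f̃(s) = ∑_{j=0}^{n+1} p_j · min(s, μ_j)`. -/
noncomputable def ftilde {Ω : Type*} [MeasurableSpace Ω]
    (P : Measure Ω) (X : Ω → ℝ) (q : ℕ → ℝ) (n : ℕ) (s : ℝ) : ℝ :=
  ∑ j ∈ Finset.range (n + 2), segProb P X q n j * min s (segMean P X q n j)

lemma seg_measurable (q : ℕ → ℝ) (n j : ℕ) : MeasurableSet (seg q n j) := by
  unfold seg; split_ifs <;> exact (by measurability)

lemma q_mono {q : ℕ → ℝ} {n : ℕ} (hmono : ∀ i < n, q i < q (i+1)) :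
    ∀ i k, i ≤ k → k ≤ n → q i ≤ q k := by
  intro i k hik hkn
  induction k with
  | zero => simp [Nat.le_zero.mp hik]
  | succ m ih =>
    rcases Nat.lt_or_ge i (m+1) with h | h
    · exact (ih (Nat.lt_succ_iff.mp h) (by omega)).trans (hmono m (by omega)).le
    · have : i = m + 1 := le_antisymm hik h
      simp [this]

lemma seg_cover (q : ℕ → ℝ) (n : ℕ) (x : ℝ) : ∃ k < n + 2, x ∈ seg q n k := by
  by_cases h0 : x ≤ q 0
  · exact ⟨0, by omega, by simp [seg, h0]⟩
  by_cases hn : q n < x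
  · refine ⟨n+1, by omega, ?_⟩
    simp only [seg, if_neg (by omega : ¬ n + 1 = 0), if_neg (by omega : ¬ n + 1 ≤ n)]
    exact hn
  push_neg at h0 hn
  have hex : ∃ k, x ≤ q k := ⟨n, hn⟩
  have hxk : x ≤ q (Nat.find hex) := Nat.find_spec hex
  have hk_pos : 0 < Nat.find hex := by
    rcases Nat.eq_zero_or_pos (Nat.find hex) with h | h
    · exfalso; rw [h] at hxk; linarith
    · exact h
  have hkn' : Nat.find hex ≤ n := Nat.find_min' hex hn
  have hlt : q (Nat.find hex - 1) < x := by
    have := Nat.find_min hex (m := Nat.find hex - 1) (by omega)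
    push_neg at this; exact this
  refine ⟨Nat.find hex, by omega, ?_⟩
  simp only [seg, if_neg (by omega : ¬ Nat.find hex = 0), if_pos hkn']
  exact ⟨hlt, hxk⟩

lemma seg_subset_Iic {q : ℕ → ℝ} {n k : ℕ} (hk : k ≤ n) : seg q n k ⊆ Set.Iic (q k) := by
  unfold seg
  split_ifs with h1
  · subst h1; exact subset_rfl
  · exact fun x hx => hx.2

lemma seg_subset_Ioi {q : ℕ → ℝ} {n k : ℕ} (hk1 : 1 ≤ k) (hk : k ≤ n + 1) :
    seg q n k ⊆ Set.Ioi (q (k-1)) := by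
  unfold seg
  split_ifs with h1 h2
  · omega
  · exact fun x hx => hx.1
  · have hk' : k = n + 1 := by omega
    subst hk'
    simp

lemma seg_disjoint {q : ℕ → ℝ} {n : ℕ} (hmono : ∀ i < n, q i < q (i+1))
    {k l : ℕ} (hkl : k < l) (hl : l ≤ n + 1) : Disjoint (seg q n k) (seg q n l) := by
  apply Set.disjoint_left.mpr
  intro x hxk hxl
  have h1 : x ≤ q k := seg_subset_Iic (by omega) hxk
  have h2 : q (l-1) < x := seg_subset_Ioi (by omega) hl hxl
  have h3 : q k ≤ q (l-1) := q_mono hmono k (l-1) (by omega) (by omega)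
  linarith

/-- For each `j ∈ {1,…,n}`, the per-interval error satisfies
`Δ_X(I_j) = sup_{s ∈ I_j} |f̃(s) − f_X(s)|
  = p_j · sup_{s ∈ I_j} (min(s, μ_j) − E[min(s,X) | X ∈ I_j])`. -/
theorem perInterval_error_formula {Ω : Type*} [MeasurableSpace Ω]
    (P : Measure Ω) [IsProbabilityMeasure P]
    (X : Ω → ℝ) (hX : Integrable X P)
    (a b : ℝ) (hab : a < b) (n : ℕ) (hn : 1 ≤ n)
    (q : ℕ → ℝ) (hq0 : q 0 = a) (hqn : q n = b)
    (hmono : ∀ i < n, q i < q (i + 1))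
    (hpos : ∀ j ≤ n + 1, 0 < segProb P X q n j) :
    ∀ j, 1 ≤ j → j ≤ n →
      sSup ((fun s => |ftilde P X q n s - ∫ ω, min s (X ω) ∂P|)
              '' Set.Ioc (q (j - 1)) (q j))
        = segProb P X q n j *
            sSup ((fun s => min s (segMean P X q n j)
                    - (∫ ω in {ω | X ω ∈ seg q n j}, min s (X ω) ∂P) / segProb P X q n j)
                '' Set.Ioc (q (j - 1)) (q j)) := by
  intro j hj1 hjn
  obtain ⟨Y, hYsm, hXY⟩ : ∃ Y, StronglyMeasurable Y ∧ X =ᵐ[P] Y :=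
    ⟨hX.1.mk X, hX.1.stronglyMeasurable_mk, hX.1.ae_eq_mk⟩
  have hYm : Measurable Y := hYsm.measurable
  have hYint : Integrable Y P := hX.congr hXY
  set B : ℕ → Set Ω := fun k => Y ⁻¹' (seg q n k) with hBdef
  have hBmeas : ∀ k, MeasurableSet (B k) := fun k => hYm (seg_measurable q n k)
  have hAB : ∀ k, {ω | X ω ∈ seg q n k} =ᵐ[P] B k := by
    intro k
    filter_upwards [hXY] with ω h
    change (X ω ∈ seg q n k) = (Y ω ∈ seg q n k)
    rw [h]
  have hp : ∀ k, segProb P X q n k = (P (B k)).toReal := fun k => by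
    unfold segProb; rw [measure_congr (hAB k)]
  have hInt : ∀ k (f : ℝ → ℝ),
      ∫ ω in {ω | X ω ∈ seg q n k}, f (X ω) ∂P = ∫ ω in B k, f (Y ω) ∂P := by
    intro k f
    rw [setIntegral_congr_set (hAB k)]
    refine integral_congr_ae (ae_restrict_of_ae ?_)
    filter_upwards [hXY] with ω h
    rw [h]
  have hqm := q_mono hmono
  have hYintOn : ∀ k, IntegrableOn Y (B k) P := fun k => hYint.integrableOn
  have hmk : ∀ k, segMean P X q n k = (∫ ω in B k, Y ω ∂P) / segProb P X q n k := by
    intro k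
    unfold segMean
    rw [hInt k (fun x => x)]
  have hIntY : ∀ k ≤ n + 1, ∫ ω in B k, Y ω ∂P = segProb P X q n k * segMean P X q n k := by
    intro k hk
    rw [hmk k, mul_comm, div_mul_cancel₀ _ (hpos k hk).ne']
  have hminInt : ∀ s : ℝ, Integrable (fun ω => min s (Y ω)) P := by
    intro s
    have := (integrable_const (μ := P) s).inf hYint
    exact this
  have hUnion : (⋃ k ∈ Finset.range (n+2), B k) = Set.univ := by
    ext ω
    simp only [Set.mem_iUnion, Finset.mem_range, Set.mem_univ, iff_true]
    obtain ⟨k, hk, hmem⟩ := seg_cover q n (Y ω)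
    exact ⟨k, hk, hmem⟩
  have hdisjB : Set.Pairwise ↑(Finset.range (n+2)) (Function.onFun Disjoint B) := by
    intro k hk l hl hkl
    simp only [Finset.coe_range, Set.mem_Iio] at hk hl
    rcases Nat.lt_or_ge k l with h | h
    · exact (seg_disjoint hmono h (by omega)).preimage Y
    · exact ((seg_disjoint hmono (by omega : l < k) (by omega)).preimage Y).symm
  have hdecomp : ∀ s : ℝ, ∫ ω, min s (X ω) ∂P
      = ∑ k ∈ Finset.range (n+2), ∫ ω in B k, min s (Y ω) ∂P := by
    intro s
    have h1 : ∫ ω, min s (X ω) ∂P = ∫ ω, min s (Y ω) ∂P := by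
      refine integral_congr_ae ?_
      filter_upwards [hXY] with ω h
      rw [h]
    rw [h1, ← setIntegral_univ, ← hUnion,
      integral_biUnion_finset _ (fun k _ => hBmeas k) hdisjB
        (fun k _ => (hminInt s).integrableOn)]
  have hzero : ∀ s ∈ Set.Ioc (q (j-1)) (q j), ∀ k ∈ Finset.range (n+2), k ≠ j →
      segProb P X q n k * min s (segMean P X q n k) = ∫ ω in B k, min s (Y ω) ∂P := by
    intro s hs k hk hkj
    simp only [Finset.mem_range] at hk
    obtain ⟨hs1, hs2⟩ := hs
    rcases Nat.lt_or_ge k j with hklt | hkge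
    · -- k < j : on B k, Y ≤ q k < s
      have hkn : k ≤ n := by omega
      have hub : ∀ ω ∈ B k, Y ω ≤ q k := fun ω hω => seg_subset_Iic hkn hω
      have hqks : q k < s := lt_of_le_of_lt (hqm k (j-1) (by omega) (by omega)) hs1
      have hIeq : ∫ ω in B k, min s (Y ω) ∂P = ∫ ω in B k, Y ω ∂P :=
        setIntegral_congr_fun (hBmeas k)
          (fun ω hω => min_eq_right ((hub ω hω).trans hqks.le))
      have hIle : ∫ ω in B k, Y ω ∂P ≤ segProb P X q n k * q k := by
        have h2 := setIntegral_mono_on (hYintOn k)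
          (integrableOn_const (measure_lt_top P _).ne) (hBmeas k) hub
        rwa [setIntegral_const, smul_eq_mul, measureReal_def, ← hp k] at h2
      have hmle : segMean P X q n k ≤ q k := by
        rw [hmk k, div_le_iff₀ (hpos k (by omega))]
        nlinarith [hIle]
      rw [hIeq, hIntY k (by omega), min_eq_right (hmle.trans hqks.le)]
    · -- k > j : on B k, s ≤ q (k-1) < Y
      have hk1 : 1 ≤ k := by omega
      have hlb : ∀ ω ∈ B k, q (k-1) < Y ω := fun ω hω => seg_subset_Ioi hk1 (by omega) hω
      have hsq : s ≤ q (k-1) := hs2.trans (hqm j (k-1) (by omega) (by omega))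
      have hIeq : ∫ ω in B k, min s (Y ω) ∂P = ∫ ω in B k, (fun _ => s) ω ∂P :=
        setIntegral_congr_fun (hBmeas k)
          (fun ω hω => min_eq_left (hsq.trans (hlb ω hω).le))
      have hIge : segProb P X q n k * q (k-1) ≤ ∫ ω in B k, Y ω ∂P := by
        have h2 := setIntegral_mono_on
          (integrableOn_const (measure_lt_top P _).ne) (hYintOn k)
          (hBmeas k) (fun ω hω => (hlb ω hω).le)
        rwa [setIntegral_const, smul_eq_mul, measureReal_def, ← hp k] at h2
      have hmge : s ≤ segMean P X q n k := by
        rw [hmk k, le_div_iff₀ (hpos k (by omega))]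
        nlinarith [hIge, hsq, hpos k (by omega : k ≤ n + 1)]
      rw [hIeq, setIntegral_const, smul_eq_mul, measureReal_def, ← hp k, min_eq_left hmge]
  have hkey : ∀ s ∈ Set.Ioc (q (j-1)) (q j),
      ftilde P X q n s - ∫ ω, min s (X ω) ∂P
        = segProb P X q n j * min s (segMean P X q n j) - ∫ ω in B j, min s (Y ω) ∂P := by
    intro s hs
    rw [hdecomp s]
    unfold ftilde
    rw [← Finset.sum_sub_distrib,
      Finset.sum_eq_single_of_mem j (Finset.mem_range.2 (by omega))
        (fun k hk hkj => by rw [hzero s hs k hk hkj, sub_self])]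
  have hnn : ∀ s ∈ Set.Ioc (q (j-1)) (q j),
      ∫ ω in B j, min s (Y ω) ∂P ≤ segProb P X q n j * min s (segMean P X q n j) := by
    intro s hs
    have h1 : ∫ ω in B j, min s (Y ω) ∂P ≤ ∫ ω in B j, Y ω ∂P :=
      setIntegral_mono_on ((hminInt s).integrableOn) (hYintOn j) (hBmeas j)
        (fun ω _ => min_le_right _ _)
    have h2 : ∫ ω in B j, min s (Y ω) ∂P ≤ ∫ ω in B j, (fun _ => s) ω ∂P :=
      setIntegral_mono_on ((hminInt s).integrableOn)
        (integrableOn_const (measure_lt_top P _).ne) (hBmeas j)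
        (fun ω _ => min_le_left _ _)
    rw [setIntegral_const, smul_eq_mul, measureReal_def, ← hp j] at h2
    rw [hIntY j (by omega)] at h1
    rw [mul_min_of_nonneg _ _ (hpos j (by omega : j ≤ n + 1)).le]
    exact le_min h2 h1
  have hpj : (0:ℝ) < segProb P X q n j := hpos j (by omega)
  have himg : (fun s => |ftilde P X q n s - ∫ ω, min s (X ω) ∂P|) '' Set.Ioc (q (j-1)) (q j)
      = (fun s => segProb P X q n j • (min s (segMean P X q n j)
          - (∫ ω in {ω | X ω ∈ seg q n j}, min s (X ω) ∂P) / segProb P X q n j))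
          '' Set.Ioc (q (j-1)) (q j) := by
    apply Set.image_congr
    intro s hs
    rw [hkey s hs, abs_of_nonneg (by linarith [hnn s hs])]
    rw [hInt j (fun x => min s x), smul_eq_mul, mul_sub, mul_comm,
      mul_comm (segProb P X q n j) ((∫ ω in B j, min s (Y ω) ∂P) / segProb P X q n j),
      div_mul_cancel₀ _ hpj.ne', mul_comm]
  rw [himg, show (fun s => segProb P X q n j • (min s (segMean P X q n j)
          - (∫ ω in {ω | X ω ∈ seg q n j}, min s (X ω) ∂P) / segProb P X q n j))
          '' Set.Ioc (q (j-1)) (q j)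
      = segProb P X q n j • ((fun s => min s (segMean P X q n j)
          - (∫ ω in {ω | X ω ∈ seg q n j}, min s (X ω) ∂P) / segProb P X q n j)
          '' Set.Ioc (q (j-1)) (q j)) from by rw [← Set.image_smul, Set.image_image],
    Real.sSup_smul_of_nonneg hpj.le, smul_eq_mul]
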